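/- Suppose |x-y| ≤ 2R and |y-z|, |z-x| ≥ 2R for x, y, z ∈ ℝ². Then (1/2)|x-z| ≤ |y-z| ≤ 2|x-z|, and |(x-y)·(x-z)|z-y|² + (y-z)·(y-x)|x-z|² + (z-x)·(z-y)|x-y|²| ≤ C R² |x-z|² for a universal constant C. -/
import Mathlib


open RealInnerProductSpace
noncomputable section

abbrev E2 := EuclideanSpace ℝ (Fin 2)

/-- One short edge (`|x-y| ≤ 2R`), two long edges (`≥ 2R`): comparability of the long
edges and the key algebraic bound `|Σ_cyc (x-y)·(x-z)|z-y|²| ≤ C R² |x-z|²`. -/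
theorem short_long_edges_bound :
    ∃ C : ℝ, 0 < C ∧
      ∀ R : ℝ, 0 < R → ∀ x y z : E2,
        ‖x - y‖ ≤ 2 * R → 2 * R ≤ ‖y - z‖ → 2 * R ≤ ‖z - x‖ →
          ((1 / 2) * ‖x - z‖ ≤ ‖y - z‖ ∧ ‖y - z‖ ≤ 2 * ‖x - z‖ ∧
            |⟪x - y, x - z⟫ * ‖z - y‖ ^ 2
              + ⟪y - z, y - x⟫ * ‖x - z‖ ^ 2
              + ⟪z - x, z - y⟫ * ‖x - y‖ ^ 2|
            ≤ C * R ^ 2 * ‖x - z‖ ^ 2) := by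
  refine ⟨8, by norm_num, fun R hR x y z hxy hyz hzx => ?_⟩
  have hxz : ‖x - z‖ = ‖z - x‖ := norm_sub_rev _ _
  have t1 : ‖x - z‖ ≤ ‖x - y‖ + ‖y - z‖ := norm_sub_le_norm_sub_add_norm_sub _ _ _
  have t2 : ‖y - z‖ ≤ ‖y - x‖ + ‖x - z‖ := norm_sub_le_norm_sub_add_norm_sub _ _ _
  have hyx : ‖y - x‖ = ‖x - y‖ := norm_sub_rev _ _
  refine ⟨by linarith, by linarith, ?_⟩
  have hzy : z - y = (x - y) - (x - z) := by abel
  have hyz' : y - z = (x - z) - (x - y) := by abel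
  have hyx' : y - x = -(x - y) := by abel
  have hzx' : z - x = -(x - z) := by abel
  set u := x - y with hu
  set v := x - z with hv
  have hnorm : ‖u - v‖ ^ 2 = ‖u‖ ^ 2 - 2 * ⟪u, v⟫ + ‖v‖ ^ 2 := by
    rw [← real_inner_self_eq_norm_sq, ← real_inner_self_eq_norm_sq,
      ← real_inner_self_eq_norm_sq, inner_sub_sub_self, real_inner_comm v u]
    ring
  have key : ⟪u, v⟫ * ‖u - v‖ ^ 2 + ⟪v - u, -u⟫ * ‖v‖ ^ 2 + ⟪-v, u - v⟫ * ‖u‖ ^ 2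
      = 2 * (‖u‖ ^ 2 * ‖v‖ ^ 2 - ⟪u, v⟫ ^ 2) := by
    rw [hnorm]
    simp only [inner_sub_left, inner_neg_left, inner_neg_right, inner_sub_right,
      real_inner_self_eq_norm_sq, real_inner_comm v u]
    ring
  rw [hzy, hyz', hyx', hzx', key]
  have hcs : |⟪u, v⟫| ≤ ‖u‖ * ‖v‖ := abs_real_inner_le_norm u v
  have hcs2 : ⟪u, v⟫ ^ 2 ≤ ‖u‖ ^ 2 * ‖v‖ ^ 2 := by
    have h := mul_self_le_mul_self (abs_nonneg ⟪u, v⟫) hcs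
    nlinarith [sq_abs ⟪u, v⟫]
  have hun : 0 ≤ ‖u‖ := norm_nonneg _
  have hvn : 0 ≤ ‖v‖ := norm_nonneg _
  have habs : |2 * (‖u‖ ^ 2 * ‖v‖ ^ 2 - ⟪u, v⟫ ^ 2)| ≤ 2 * (‖u‖ ^ 2 * ‖v‖ ^ 2) := by
    rw [abs_of_nonneg (by linarith)]
    have := sq_nonneg ⟪u, v⟫
    linarith
  have hu2 : ‖u‖ ^ 2 ≤ (2 * R) ^ 2 := pow_le_pow_left₀ hun hxy 2
  have hv2 : 0 ≤ ‖v‖ ^ 2 := sq_nonneg _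
  calc |2 * (‖u‖ ^ 2 * ‖v‖ ^ 2 - ⟪u, v⟫ ^ 2)| ≤ 2 * (‖u‖ ^ 2 * ‖v‖ ^ 2) := habs
    _ ≤ 2 * ((2 * R) ^ 2 * ‖v‖ ^ 2) := by
        have := mul_le_mul_of_nonneg_right hu2 hv2
        linarith
    _ = 8 * R ^ 2 * ‖v‖ ^ 2 := by ring
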